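/- Let A ∈ ℝ≥0^{n×n} with λ(A) = 1, let C be a completely reducible subgraph of the critical graph of A with node set N_c and cyclicity γ, let B = (A^γ)* (Kleene star of the γ-th max-algebraic power), and define C, R, S by: C has columns of B with indices in N_c (others zero), R has rows of B with indices in N_c (others zero), and S agrees with A on edges of C and is zero elsewhere. If T is such that the sequence {S^t} is periodic for t ≥ T, then S^{lγ} ⊗ R = R and C ⊗ S^{lγ} = C for every multiple lγ ≥ T. -/

import Mathlib

open scoped NNReal Classical

namespace MaxAlg

/-- Max-times matrix product over `ℝ≥0`. -/
noncomputable def mmul {n : ℕ} (A B : Fin n → Fin n → ℝ≥0) : Fin n → Fin n → ℝ≥0 :=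
  fun i j => Finset.univ.sup fun k => A i k * B k j

/-- Max-algebraic powers of a matrix, with `mpow A 0` the identity. -/
noncomputable def mpow {n : ℕ} (A : Fin n → Fin n → ℝ≥0) : ℕ → (Fin n → Fin n → ℝ≥0)
  | 0 => fun i j => if i = j then 1 else 0
  | (k+1) => mmul A (mpow A k)

/-- Weight of a walk `p` of length `k` (product of the edge weights). -/
noncomputable def pathWeight {n : ℕ} (A : Fin n → Fin n → ℝ≥0) (k : ℕ)
    (p : Fin (k+1) → Fin n) : ℝ≥0 :=
  ∏ t : Fin k, A (p t.castSucc) (p t.succ)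

/-- `p` is a walk in the edge relation `E`. -/
def IsEPath {n : ℕ} (E : Fin n → Fin n → Prop) (k : ℕ) (p : Fin (k+1) → Fin n) : Prop :=
  ∀ t : Fin k, E (p t.castSucc) (p t.succ)

/-- `j` is reachable from `i` in `E` (possibly by the empty path). -/
def Reach {n : ℕ} (E : Fin n → Fin n → Prop) (i j : Fin n) : Prop :=
  ∃ k, ∃ p : Fin (k+1) → Fin n, IsEPath E k p ∧ p 0 = i ∧ p (Fin.last k) = j

/-- Edge relation of the digraph associated with a nonnegative matrix. -/
def edges {n : ℕ} (A : Fin n → Fin n → ℝ≥0) (i j : Fin n) : Prop := A i j ≠ 0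

/-- Lengths of (positive-length) closed walks through `i` in `E`. -/
def cycLen {n : ℕ} (E : Fin n → Fin n → Prop) (i : Fin n) : Set ℕ :=
  {k | 0 < k ∧ ∃ p : Fin (k+1) → Fin n, IsEPath E k p ∧ p 0 = i ∧ p (Fin.last k) = i}

/-- Lengths of all closed walks in `E`. -/
def allCycLen {n : ℕ} (E : Fin n → Fin n → Prop) : Set ℕ :=
  {k | ∃ i, k ∈ cycLen E i}

/-- The gcd of a set of naturals, characterized by the gcd property. -/
noncomputable def setGcd (S : Set ℕ) : ℕ :=
  sInf {d | (∀ s ∈ S, d ∣ s) ∧ ∀ e : ℕ, (∀ s ∈ S, e ∣ s) → e ∣ d}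

/-- Cyclicity of a (completely reducible) digraph: lcm over the nodes of the
gcd of the cycle lengths through that node. -/
noncomputable def graphCyc {n : ℕ} (E : Fin n → Fin n → Prop) : ℕ :=
  Finset.univ.lcm fun i => if (cycLen E i).Nonempty then setGcd (cycLen E i) else 1

/-- The maximum cycle geometric mean `λ(A)`. -/
noncomputable def mcgm {n : ℕ} (A : Fin n → Fin n → ℝ≥0) : ℝ≥0 :=
  sSup {x | ∃ k : ℕ, 0 < k ∧ k ≤ n ∧ ∃ p : Fin (k+1) → Fin n,
    p 0 = p (Fin.last k) ∧ x = pathWeight A k p ^ ((1 : ℝ) / (k : ℝ))}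

/-- The Kleene star `A* = I ⊕ A ⊕ A² ⊕ ⋯` (entrywise supremum of all powers). -/
noncomputable def kleeneStar {n : ℕ} (A : Fin n → Fin n → ℝ≥0) : Fin n → Fin n → ℝ≥0 :=
  fun i j => ⨆ k : ℕ, mpow A k i j

/-- `(i,j)` is a critical edge: it lies on a cycle attaining `λ(A)`. -/
def IsCriticalEdge {n : ℕ} (A : Fin n → Fin n → ℝ≥0) (i j : Fin n) : Prop :=
  ∃ k : ℕ, 0 < k ∧ k ≤ n ∧ ∃ p : Fin (k+1) → Fin n, p 0 = p (Fin.last k) ∧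
    pathWeight A k p ^ ((1 : ℝ) / (k : ℝ)) = mcgm A ∧
    ∃ t : Fin k, p t.castSucc = i ∧ p t.succ = j

/-- A node lying on a critical cycle of `A`. -/
def IsCriticalNode {n : ℕ} (A : Fin n → Fin n → ℝ≥0) (i : Fin n) : Prop :=
  (∃ j, IsCriticalEdge A i j) ∨ (∃ j, IsCriticalEdge A j i)

/-- A completely reducible subgraph of the critical graph of `A`:
every edge is critical, and every edge can be completed to a cycle of the
subgraph (so each weakly connected part is strongly connected). -/
structure CritSubgraph {n : ℕ} (A : Fin n → Fin n → ℝ≥0) where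
  E : Fin n → Fin n → Prop
  critical : ∀ i j, E i j → IsCriticalEdge A i j
  reducible : ∀ i j, E i j → ∃ k, ∃ p : Fin (k+1) → Fin n,
    IsEPath E k p ∧ p 0 = j ∧ p (Fin.last k) = i

/-- Node set `N_c` of the subgraph. -/
def CritSubgraph.Nc {n : ℕ} {A : Fin n → Fin n → ℝ≥0} (G : CritSubgraph A) (i : Fin n) : Prop :=
  (∃ j, G.E i j) ∨ (∃ j, G.E j i)

/-- The matrix `C`: columns of `(A^γ)*` with indices in `N_c`, other columns zero. -/
noncomputable def Cmat {n : ℕ} (A : Fin n → Fin n → ℝ≥0) (G : CritSubgraph A) :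
    Fin n → Fin n → ℝ≥0 :=
  fun i j => if G.Nc j then kleeneStar (mpow A (graphCyc G.E)) i j else 0

/-- The matrix `R`: rows of `(A^γ)*` with indices in `N_c`, other rows zero. -/
noncomputable def Rmat {n : ℕ} (A : Fin n → Fin n → ℝ≥0) (G : CritSubgraph A) :
    Fin n → Fin n → ℝ≥0 :=
  fun i j => if G.Nc i then kleeneStar (mpow A (graphCyc G.E)) i j else 0

/-- The matrix `S`: the restriction of `A` to the edges of the subgraph. -/
noncomputable def Smat {n : ℕ} (A : Fin n → Fin n → ℝ≥0) (G : CritSubgraph A) :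
    Fin n → Fin n → ℝ≥0 :=
  fun i j => if G.E i j then A i j else 0

/-- The CSR product `P^(t) = C ⊗ S^t ⊗ R`. -/
noncomputable def csr {n : ℕ} (A : Fin n → Fin n → ℝ≥0) (G : CritSubgraph A) (t : ℕ) :
    Fin n → Fin n → ℝ≥0 :=
  mmul (mmul (Cmat A G) (mpow (Smat A G) t)) (Rmat A G)

/-- The strongly connected component (as a node set) of `i` in `E`. -/
def scc {n : ℕ} (E : Fin n → Fin n → Prop) (i : Fin n) : Set (Fin n) :=
  {j | Reach E i j ∧ Reach E j i}

/-- The principal submatrix of `A` on the strongly connected component of `i`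
in `D(A)` (other entries zero). -/
noncomputable def compMat {n : ℕ} (A : Fin n → Fin n → ℝ≥0) (i : Fin n) :
    Fin n → Fin n → ℝ≥0 :=
  fun a b => if a ∈ scc (edges A) i ∧ b ∈ scc (edges A) i then A a b else 0

/-- `λ(i)`: the m.c.g.m. of the component of `D(A)` containing `i`. -/
noncomputable def lamNode {n : ℕ} (A : Fin n → Fin n → ℝ≥0) (i : Fin n) : ℝ≥0 :=
  mcgm (compMat A i)

/-- `i` belongs to a nontrivial component of `D(A)` (it lies on a cycle). -/
def Nontrivial' {n : ℕ} (A : Fin n → Fin n → ℝ≥0) (i : Fin n) : Prop :=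
  (cycLen (edges A) i).Nonempty

/-- `γ`: the lcm of the cyclicities of the critical graphs of the nontrivial
components of `D(A)`. -/
noncomputable def gammaU {n : ℕ} (A : Fin n → Fin n → ℝ≥0) : ℕ :=
  Finset.univ.lcm fun i =>
    if Nontrivial' A i then graphCyc (IsCriticalEdge (compMat A i)) else 1

/-- Max-times matrix-vector product. -/
noncomputable def mvec {n : ℕ} (M : Fin n → Fin n → ℝ≥0) (y : Fin n → ℝ≥0) :
    Fin n → ℝ≥0 :=
  fun a => Finset.univ.sup fun k => M a k * y k

/-- `i` strongly accesses `j`: paths of every sufficiently large length exist. -/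
def StrongAccess {n : ℕ} (E : Fin n → Fin n → Prop) (i j : Fin n) : Prop :=
  ∃ T, ∀ t ≥ T, ∃ p : Fin (t+1) → Fin n, IsEPath E t p ∧ p 0 = i ∧ p (Fin.last t) = j

/-! ### Auxiliary lemmas -/

section Aux

variable {n : ℕ}

lemma sup_mul_le {ι : Type*} (s : Finset ι) (f : ι → ℝ≥0) (c X : ℝ≥0)
    (h : ∀ x ∈ s, f x * c ≤ X) : (s.sup f) * c ≤ X := by
  rcases eq_or_ne c 0 with rfl | hc
  · simp
  · rw [← le_div_iff₀ (pos_iff_ne_zero.2 hc)]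
    exact Finset.sup_le fun x hx => (le_div_iff₀ (pos_iff_ne_zero.2 hc)).2 (h x hx)

lemma mul_sup_le {ι : Type*} (s : Finset ι) (f : ι → ℝ≥0) (c X : ℝ≥0)
    (h : ∀ x ∈ s, c * f x ≤ X) : c * (s.sup f) ≤ X := by
  rw [mul_comm]
  exact sup_mul_le s f c X fun x hx => by rw [mul_comm]; exact h x hx

lemma mul_iSup_le (f : ℕ → ℝ≥0) (c X : ℝ≥0) (h : ∀ m, c * f m ≤ X) :
    c * (⨆ m, f m) ≤ X := by
  rcases eq_or_ne c 0 with rfl | hc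
  · simp
  · rw [mul_comm, ← le_div_iff₀ (pos_iff_ne_zero.2 hc)]
    exact ciSup_le fun m => (le_div_iff₀ (pos_iff_ne_zero.2 hc)).2 (by rw [mul_comm]; exact h m)

lemma mmul_assoc (A B C : Fin n → Fin n → ℝ≥0) :
    mmul (mmul A B) C = mmul A (mmul B C) := by
  funext i j
  apply le_antisymm
  · refine Finset.sup_le fun k _ => ?_
    refine sup_mul_le _ _ _ _ fun m _ => ?_
    calc A i m * B m k * (C k j) = A i m * (B m k * C k j) := mul_assoc _ _ _
    _ ≤ A i m * (mmul B C) m j := by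
        exact mul_le_mul_right (Finset.le_sup (f := fun k' => B m k' * C k' j)
          (Finset.mem_univ k)) _
    _ ≤ _ := Finset.le_sup (f := fun m' => A i m' * (mmul B C) m' j) (Finset.mem_univ m)
  · refine Finset.sup_le fun m _ => ?_
    refine mul_sup_le _ _ _ _ fun k _ => ?_
    calc A i m * (B m k * C k j) = (A i m * B m k) * C k j := (mul_assoc _ _ _).symm
    _ ≤ (mmul A B) i k * C k j := by
        exact mul_le_mul_left (Finset.le_sup (f := fun m' => A i m' * B m' k)
          (Finset.mem_univ m)) _
    _ ≤ _ := Finset.le_sup (f := fun k' => (mmul A B) i k' * C k' j) (Finset.mem_univ k)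

lemma mmul_id_right (B A : Fin n → Fin n → ℝ≥0) : mmul A (mpow B 0) = A := by
  funext i j
  apply le_antisymm
  · refine Finset.sup_le fun k _ => ?_
    simp only [mpow]
    by_cases h : k = j
    · subst h; simp
    · simp [h]
  · refine le_trans ?_ (Finset.le_sup (Finset.mem_univ j))
    simp [mpow]

lemma mmul_id_left (B A : Fin n → Fin n → ℝ≥0) : mmul (mpow B 0) A = A := by
  funext i j
  apply le_antisymm
  · refine Finset.sup_le fun k _ => ?_
    simp only [mpow]
    by_cases h : i = k
    · subst h; simp
    · simp [h]
  · refine le_trans ?_ (Finset.le_sup (Finset.mem_univ i))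
    simp [mpow]

lemma mpow_add (A : Fin n → Fin n → ℝ≥0) (a b : ℕ) :
    mpow A (a + b) = mmul (mpow A a) (mpow A b) := by
  induction a with
  | zero => rw [Nat.zero_add, mmul_id_left A]
  | succ a ih =>
      have : a + 1 + b = (a + b) + 1 := by omega
      rw [this]
      show mmul A (mpow A (a + b)) = _
      rw [ih]
      rw [← mmul_assoc]
      rfl

lemma mpow_mul (A : Fin n → Fin n → ℝ≥0) (a b : ℕ) :
    mpow A (a * b) = mpow (mpow A a) b := by
  induction b with
  | zero => rw [Nat.mul_zero]; rfl
  | succ b ih =>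
      have : a * (b + 1) = a + a * b := by ring
      rw [this, mpow_add, ih]
      rfl

lemma mmul_mono {A A' B B' : Fin n → Fin n → ℝ≥0}
    (hA : ∀ i j, A i j ≤ A' i j) (hB : ∀ i j, B i j ≤ B' i j) :
    ∀ i j, mmul A B i j ≤ mmul A' B' i j := by
  intro i j
  refine Finset.sup_le fun k _ => ?_
  exact le_trans (mul_le_mul' (hA i k) (hB k j))
    (Finset.le_sup (f := fun k' => A' i k' * B' k' j) (Finset.mem_univ k))

lemma mpow_mono {A A' : Fin n → Fin n → ℝ≥0} (h : ∀ i j, A i j ≤ A' i j) (t : ℕ) :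
    ∀ i j, mpow A t i j ≤ mpow A' t i j := by
  induction t with
  | zero => intro i j; exact le_rfl
  | succ t ih => exact mmul_mono h ih

lemma le_mpow_add (A : Fin n → Fin n → ℝ≥0) (a b : ℕ) (i k j : Fin n) :
    mpow A a i k * mpow A b k j ≤ mpow A (a + b) i j := by
  rw [mpow_add]
  exact Finset.le_sup (f := fun k' => mpow A a i k' * mpow A b k' j) (Finset.mem_univ k)

lemma mpow_row_zero {S : Fin n → Fin n → ℝ≥0} {i : Fin n}
    (h : ∀ m, S i m = 0) {t : ℕ} (ht : 0 < t) : ∀ j, mpow S t i j = 0 := by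
  intro j
  obtain ⟨t', rfl⟩ : ∃ t', t = t' + 1 := ⟨t - 1, by omega⟩
  show Finset.univ.sup (fun k => S i k * mpow S t' k j) = 0
  simp [h]

lemma mpow_col_zero {S : Fin n → Fin n → ℝ≥0} {j : Fin n}
    (h : ∀ m, S m j = 0) {t : ℕ} (ht : 0 < t) : ∀ i, mpow S t i j = 0 := by
  induction t with
  | zero => omega
  | succ t ih =>
      intro i
      show Finset.univ.sup (fun k => S i k * mpow S t k j) = 0
      rcases Nat.eq_zero_or_pos t with rfl | ht'
      · simp only [mpow]
        refine le_antisymm (Finset.sup_le fun k _ => ?_) zero_le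
        by_cases hk : k = j
        · subst hk; simp [h]
        · simp [hk]
      · refine le_antisymm (Finset.sup_le fun k _ => ?_) zero_le
        rw [ih ht' k, mul_zero]

/-- Weight of the first `k` steps of the ℕ-indexed walk `w`. -/
noncomputable def nW (A : Fin n → Fin n → ℝ≥0) (k : ℕ) (w : ℕ → Fin n) : ℝ≥0 :=
  ∏ t ∈ Finset.range k, A (w t) (w (t+1))

/-- The first `k` steps of `w` are a walk in `E`. -/
def nIsPath (E : Fin n → Fin n → Prop) (k : ℕ) (w : ℕ → Fin n) : Prop :=
  ∀ t < k, E (w t) (w (t+1))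

lemma nW_congr {A : Fin n → Fin n → ℝ≥0} {k : ℕ} {w w' : ℕ → Fin n}
    (h : ∀ t ≤ k, w t = w' t) : nW A k w = nW A k w' := by
  refine Finset.prod_congr rfl fun t ht => ?_
  rw [Finset.mem_range] at ht
  rw [h t (by omega), h (t+1) (by omega)]

lemma nW_succ' (A : Fin n → Fin n → ℝ≥0) (k : ℕ) (w : ℕ → Fin n) :
    nW A (k+1) w = A (w 0) (w 1) * nW A k (fun t => w (t+1)) := by
  rw [nW, Finset.prod_range_succ', mul_comm]
  rfl

lemma nW_add (A : Fin n → Fin n → ℝ≥0) (a b : ℕ) (w : ℕ → Fin n) :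
    nW A (a + b) w = nW A a w * nW A b (fun t => w (a + t)) := by
  rw [nW, Finset.prod_range_add]
  congr 1

/-- Concatenation of ℕ-indexed walks. -/
def ncat (a : ℕ) (u v : ℕ → Fin n) : ℕ → Fin n :=
  fun t => if t < a then u t else v (t - a)

lemma nW_ncat (A : Fin n → Fin n → ℝ≥0) (a m : ℕ) (u v : ℕ → Fin n)
    (h : u a = v 0) : nW A (a + m) (ncat a u v) = nW A a u * nW A m v := by
  rw [nW_add]
  congr 1
  · refine Finset.prod_congr rfl fun t ht => ?_
    rw [Finset.mem_range] at ht
    have h1' : ncat a u v t = u t := by simp [ncat, ht]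
    have h2' : ncat a u v (t+1) = u (t+1) := by
      by_cases h' : t + 1 < a
      · simp [ncat, h']
      · have : t + 1 = a := by omega
        subst this
        simp [ncat, h]
    rw [h1', h2']
  · refine Finset.prod_congr rfl fun t _ => ?_
    have h1' : ncat a u v (a + t) = v t := by
      simp [ncat, Nat.add_sub_cancel_left]
    have h2' : ncat a u v (a + t + 1) = v (t + 1) := by
      have hlt : ¬ a + t + 1 < a := by omega
      simp only [ncat, hlt, if_false]
      congr 1
      omega
    show A (ncat a u v (a + t)) (ncat a u v (a + t + 1)) = A (v t) (v (t + 1))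
    rw [h1', h2']

lemma nIsPath_ncat {E : Fin n → Fin n → Prop} {a m : ℕ} {u v : ℕ → Fin n}
    (hu : nIsPath E a u) (hv : nIsPath E m v) (h : u a = v 0) :
    nIsPath E (a + m) (ncat a u v) := by
  intro t ht
  by_cases h1' : t + 1 < a
  · have h0 : t < a := by omega
    simp only [ncat, h0, if_true, h1', if_true]
    exact hu t h0
  · by_cases h0 : t < a
    · have : t + 1 = a := by omega
      simp only [ncat, h0, if_true, this, lt_irrefl, if_false, Nat.sub_self, ← h]
      rw [← this]
      exact hu t h0
    · have e1 : t - a + 1 = t + 1 - a := by omega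
      simp only [ncat, h0, if_false, h1', if_false, ← e1]
      exact hv (t - a) (by omega)

lemma nW_le_mpow (A : Fin n → Fin n → ℝ≥0) (k : ℕ) (w : ℕ → Fin n) :
    nW A k w ≤ mpow A k (w 0) (w k) := by
  induction k generalizing w with
  | zero => simp [nW, mpow]
  | succ k ih =>
      rw [nW_succ']
      calc A (w 0) (w 1) * nW A k (fun t => w (t+1))
          ≤ A (w 0) (w 1) * mpow A k (w 1) (w (k+1)) := by
            exact mul_le_mul_right (ih (fun t => w (t+1))) _
        _ ≤ _ := Finset.le_sup (f := fun m => A (w 0) m * mpow A k m (w (k+1)))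
            (Finset.mem_univ (w 1))

lemma exists_walk_of_mpow {A : Fin n → Fin n → ℝ≥0} {k : ℕ} {i j : Fin n}
    (h : mpow A k i j ≠ 0) :
    ∃ w : ℕ → Fin n, w 0 = i ∧ w k = j ∧ mpow A k i j ≤ nW A k w := by
  induction k generalizing i j with
  | zero =>
      have hij : i = j := by
        by_contra hne
        simp [mpow, hne] at h
      exact ⟨fun _ => i, rfl, hij, by simp [nW, mpow, hij]⟩
  | succ k ih =>
      haveI : Nonempty (Fin n) := ⟨i⟩
      obtain ⟨m, _, hm⟩ := Finset.exists_mem_eq_sup Finset.univ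
        (Finset.univ_nonempty) (fun m => A i m * mpow A k m j)
      have hmul : mpow A (k+1) i j = A i m * mpow A k m j := hm
      have hk : mpow A k m j ≠ 0 := by
        intro h0
        rw [hmul, h0, mul_zero] at h
        exact h rfl
      obtain ⟨w', hw0, hwk, hwle⟩ := ih hk
      refine ⟨ncat 1 (fun t => if t = 0 then i else m) w', by simp [ncat], ?_, ?_⟩
      · show ncat 1 _ w' (k+1) = j
        have : ¬ k + 1 < 1 := by omega
        simp only [ncat, this, if_false, Nat.add_sub_cancel]
        exact hwk
      · calc mpow A (k+1) i j = A i m * mpow A k m j := hmul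
          _ ≤ A i m * nW A k w' := mul_le_mul_right hwle _
          _ = nW A 1 (fun t => if t = 0 then i else m) * nW A k w' := by
              congr 1
              simp [nW]
          _ = nW A (1 + k) (ncat 1 (fun t => if t = 0 then i else m) w') :=
              (nW_ncat A 1 k _ w' (by simp [hw0])).symm
          _ = nW A (k + 1) (ncat 1 (fun t => if t = 0 then i else m) w') := by
              rw [Nat.add_comm]

lemma ncat_apply_add (a m : ℕ) (u v : ℕ → Fin n) : ncat a u v (a + m) = v m := by
  have h1' : ¬ a + m < a := by omega
  simp only [ncat, h1', if_false, Nat.add_sub_cancel_left]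

lemma ncat_apply_zero {a : ℕ} {u v : ℕ → Fin n} (h : u a = v 0) :
    ncat a u v 0 = u 0 := by
  rcases Nat.eq_zero_or_pos a with rfl | ha
  · simpa [ncat] using h.symm
  · simp [ncat, ha]

lemma pathWeight_eq_nW (A : Fin n → Fin n → ℝ≥0) (k : ℕ) (w : ℕ → Fin n) :
    pathWeight A k (fun t : Fin (k+1) => w t.val) = nW A k w := by
  rw [pathWeight, nW, ← Fin.prod_univ_eq_prod_range (fun t => A (w t) (w (t+1))) k]
  refine Finset.prod_congr rfl fun t _ => ?_
  congr 1

lemma rpow_recip_le_one {x : ℝ≥0} {k : ℕ} (hk : 0 < k)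
    (h : x ^ ((1:ℝ)/(k:ℝ)) ≤ 1) : x ≤ 1 := by
  have hk' : (k : ℝ) ≠ 0 := Nat.cast_ne_zero.2 (by omega)
  have hxx : x = (x ^ ((1:ℝ)/(k:ℝ))) ^ (k:ℝ) := by
    rw [← NNReal.rpow_mul, one_div, inv_mul_cancel₀ hk', NNReal.rpow_one]
  calc x = (x ^ ((1:ℝ)/(k:ℝ))) ^ (k:ℝ) := hxx
    _ ≤ 1 ^ (k:ℝ) := NNReal.rpow_le_rpow h (by positivity)
    _ = 1 := NNReal.one_rpow _

lemma rpow_recip_eq_one {x : ℝ≥0} {k : ℕ} (hk : 0 < k)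
    (h : x ^ ((1:ℝ)/(k:ℝ)) = 1) : x = 1 := by
  have hk' : (k : ℝ) ≠ 0 := Nat.cast_ne_zero.2 (by omega)
  have hxx : x = (x ^ ((1:ℝ)/(k:ℝ))) ^ (k:ℝ) := by
    rw [← NNReal.rpow_mul, one_div, inv_mul_cancel₀ hk', NNReal.rpow_one]
  rw [hxx, h, NNReal.one_rpow]

lemma mcgm_bddAbove {A : Fin n → Fin n → ℝ≥0} (h1 : mcgm A = 1) :
    BddAbove {x | ∃ k : ℕ, 0 < k ∧ k ≤ n ∧ ∃ p : Fin (k+1) → Fin n,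
      p 0 = p (Fin.last k) ∧ x = pathWeight A k p ^ ((1 : ℝ) / (k : ℝ))} := by
  by_contra hb
  rw [mcgm, csSup_of_not_bddAbove hb, csSup_empty] at h1
  exact zero_ne_one h1

lemma closed_short_le_one {A : Fin n → Fin n → ℝ≥0} (h1 : mcgm A = 1) {k : ℕ}
    (hk : 0 < k) (hkn : k ≤ n) {w : ℕ → Fin n} (hc : w 0 = w k) :
    nW A k w ≤ 1 := by
  set p : Fin (k+1) → Fin n := fun t => w t.val with hp
  have hcl : p 0 = p (Fin.last k) := by
    show w ((0 : Fin (k+1)).val) = w ((Fin.last k).val)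
    rw [Fin.val_zero, Fin.val_last]
    exact hc
  have hmem : pathWeight A k p ^ ((1:ℝ)/(k:ℝ)) ∈ {x | ∃ k' : ℕ, 0 < k' ∧ k' ≤ n ∧
      ∃ p' : Fin (k'+1) → Fin n, p' 0 = p' (Fin.last k') ∧
      x = pathWeight A k' p' ^ ((1 : ℝ) / (k' : ℝ))} :=
    ⟨k, hk, hkn, p, hcl, rfl⟩
  have hle : pathWeight A k p ^ ((1:ℝ)/(k:ℝ)) ≤ 1 := by
    have := le_csSup (mcgm_bddAbove h1) hmem
    rwa [← mcgm, h1] at this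
  have := rpow_recip_le_one hk hle
  rwa [hp, pathWeight_eq_nW] at this

lemma nW_split (A : Fin n → Fin n → ℝ≥0) {k : ℕ} (hk : n < k) (w : ℕ → Fin n) :
    ∃ a b : ℕ, a < b ∧ b ≤ n ∧ w a = w b ∧
      nW A k w = nW A (a + (k - b)) (ncat a w (fun t => w (b + t))) *
        nW A (b - a) (fun t => w (a + t)) ∧
      w (a + 0) = w (a + (b - a)) ∧
      ncat a w (fun t => w (b + t)) 0 = w 0 ∧
      ncat a w (fun t => w (b + t)) (a + (k - b)) = w k := by
  have hn : 0 < n := (w 0).pos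
  have hcard : Fintype.card (Fin n) < Fintype.card (Fin (n+1)) := by simp
  obtain ⟨a', b', hne, heq⟩ :=
    Fintype.exists_ne_map_eq_of_card_lt (fun t : Fin (n+1) => w t.val) hcard
  have hvalne : a'.val ≠ b'.val := fun h => hne (Fin.ext h)
  obtain ⟨a, b, hab, hbn, weq⟩ : ∃ a b : ℕ, a < b ∧ b ≤ n ∧ w a = w b := by
    rcases lt_or_gt_of_ne hvalne with h | h
    · exact ⟨a'.val, b'.val, h, by omega, heq⟩
    · exact ⟨b'.val, a'.val, h, by omega, heq.symm⟩
  refine ⟨a, b, hab, hbn, weq, ?_, ?_, ?_, ?_⟩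
  · have hk' : k = a + ((b - a) + (k - b)) := by omega
    calc nW A k w = nW A (a + ((b - a) + (k - b))) w := by rw [← hk']
      _ = nW A a w * (nW A (b-a) (fun t => w (a+t)) *
            nW A (k-b) (fun t => w (a + ((b-a) + t)))) := by
          rw [nW_add, nW_add]
      _ = nW A a w * (nW A (b-a) (fun t => w (a+t)) *
            nW A (k-b) (fun t => w (b + t))) := by
          congr 1
          congr 1
          exact nW_congr fun t _ => congrArg w (by omega)
      _ = (nW A a w * nW A (k-b) (fun t => w (b + t))) *
            nW A (b-a) (fun t => w (a+t)) := by ring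
      _ = nW A (a + (k - b)) (ncat a w (fun t => w (b + t))) *
            nW A (b - a) (fun t => w (a + t)) := by
          rw [nW_ncat _ _ _ _ _ (by simpa using weq)]
  · have e2 : a + (b - a) = b := by omega
    rw [Nat.add_zero, e2]
    exact weq
  · rw [ncat_apply_zero (by simpa using weq)]
  · rw [ncat_apply_add]
    exact congrArg w (by omega)

lemma closed_nW_le_one {A : Fin n → Fin n → ℝ≥0} (h1 : mcgm A = 1) :
    ∀ k (w : ℕ → Fin n), w 0 = w k → nW A k w ≤ 1 := by
  intro k
  induction k using Nat.strong_induction_on with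
  | _ k ih =>
  intro w hc
  rcases Nat.eq_zero_or_pos k with rfl | hk
  · simp [nW]
  rcases le_or_gt k n with hkn | hkn
  · exact closed_short_le_one h1 hk hkn hc
  · obtain ⟨a, b, hab, hbn, weq, hsplit, hmidc, ho0, hoe⟩ := nW_split A hkn w
    have hmid : nW A (b-a) (fun t => w (a+t)) ≤ 1 :=
      ih (b-a) (by omega) _ hmidc
    have houter : nW A (a + (k-b)) (ncat a w fun t => w (b+t)) ≤ 1 := by
      refine ih _ (by omega) _ ?_
      rw [ho0, hoe]
      exact hc
    calc nW A k w = _ * _ := hsplit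
      _ ≤ 1 * 1 := mul_le_mul' houter hmid
      _ = 1 := mul_one 1

/-- Global bound on walk weights. -/
noncomputable def wbound (A : Fin n → Fin n → ℝ≥0) : ℝ≥0 :=
  (1 ⊔ Finset.univ.sup (fun p : Fin n × Fin n => A p.1 p.2)) ^ n

lemma nW_le_wbound {A : Fin n → Fin n → ℝ≥0} (h1 : mcgm A = 1) :
    ∀ k (w : ℕ → Fin n), nW A k w ≤ wbound A := by
  intro k
  induction k using Nat.strong_induction_on with
  | _ k ih =>
  intro w
  rcases le_or_gt k n with hkn | hkn
  · calc nW A k w ≤ ∏ _t ∈ Finset.range k,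
          (1 ⊔ Finset.univ.sup (fun p : Fin n × Fin n => A p.1 p.2)) := by
          refine Finset.prod_le_prod' fun t _ => ?_
          exact le_trans (Finset.le_sup (f := fun p : Fin n × Fin n => A p.1 p.2)
            (Finset.mem_univ (w t, w (t+1)))) le_sup_right
      _ = (1 ⊔ Finset.univ.sup (fun p : Fin n × Fin n => A p.1 p.2)) ^ k := by
          rw [Finset.prod_const, Finset.card_range]
      _ ≤ wbound A := pow_le_pow_right₀ le_sup_left hkn
  · obtain ⟨a, b, hab, hbn, weq, hsplit, hmidc, _, _⟩ := nW_split A hkn w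
    have hmid : nW A (b-a) (fun t => w (a+t)) ≤ 1 :=
      closed_nW_le_one h1 _ _ hmidc
    have houter : nW A (a + (k-b)) (ncat a w fun t => w (b+t)) ≤ wbound A :=
      ih _ (by omega) _
    calc nW A k w = _ * _ := hsplit
      _ ≤ wbound A * 1 := mul_le_mul' houter hmid
      _ = wbound A := mul_one _

lemma mpow_le_wbound {A : Fin n → Fin n → ℝ≥0} (h1 : mcgm A = 1) (k : ℕ)
    (i j : Fin n) : mpow A k i j ≤ wbound A := by
  by_cases h : mpow A k i j = 0
  · rw [h]; exact zero_le
  · obtain ⟨w, _, _, hle⟩ := exists_walk_of_mpow h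
    exact hle.trans (nW_le_wbound h1 k w)

lemma mpow_le_kleene {A : Fin n → Fin n → ℝ≥0} (h1 : mcgm A = 1) (γ m : ℕ)
    (i j : Fin n) : mpow (mpow A γ) m i j ≤ kleeneStar (mpow A γ) i j := by
  refine le_ciSup (f := fun k => mpow (mpow A γ) k i j) ?_ m
  refine ⟨wbound A, ?_⟩
  rintro x ⟨k, rfl⟩
  show mpow (mpow A γ) k i j ≤ wbound A
  rw [← mpow_mul]
  exact mpow_le_wbound h1 _ i j

lemma mpow_mul_kleene_le {A : Fin n → Fin n → ℝ≥0} (h1 : mcgm A = 1) (γ l : ℕ)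
    (i k j : Fin n) :
    mpow (mpow A γ) l i k * kleeneStar (mpow A γ) k j ≤ kleeneStar (mpow A γ) i j := by
  show mpow (mpow A γ) l i k * (⨆ m, mpow (mpow A γ) m k j) ≤ _
  refine mul_iSup_le _ _ _ fun m => ?_
  calc mpow (mpow A γ) l i k * mpow (mpow A γ) m k j
      ≤ mpow (mpow A γ) (l + m) i j := le_mpow_add _ l m i k j
    _ ≤ kleeneStar (mpow A γ) i j := mpow_le_kleene h1 γ (l+m) i j

lemma kleene_mul_mpow_le {A : Fin n → Fin n → ℝ≥0} (h1 : mcgm A = 1) (γ l : ℕ)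
    (i k j : Fin n) :
    kleeneStar (mpow A γ) i k * mpow (mpow A γ) l k j ≤ kleeneStar (mpow A γ) i j := by
  rw [mul_comm]
  show mpow (mpow A γ) l k j * (⨆ m, mpow (mpow A γ) m i k) ≤ _
  refine mul_iSup_le _ _ _ fun m => ?_
  rw [mul_comm]
  calc mpow (mpow A γ) m i k * mpow (mpow A γ) l k j
      ≤ mpow (mpow A γ) (m + l) i j := le_mpow_add _ m l i k j
    _ ≤ kleeneStar (mpow A γ) i j := mpow_le_kleene h1 γ (m+l) i j

lemma prod_window_periodic (F : ℕ → ℝ≥0) (k : ℕ) (hper : ∀ s, F (s + k) = F s) :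
    ∀ off, ∏ s ∈ Finset.range k, F (off + s) = ∏ s ∈ Finset.range k, F s := by
  intro off
  induction off with
  | zero => exact Finset.prod_congr rfl fun t _ => by rw [Nat.zero_add]
  | succ off ih =>
      rcases Nat.eq_zero_or_pos k with rfl | hk
      · simp
      obtain ⟨K, rfl⟩ : ∃ K, k = K + 1 := ⟨k-1, by omega⟩
      rw [← ih, Finset.prod_range_succ (fun s => F (off + 1 + s)) K,
        Finset.prod_range_succ' (fun s => F (off + s)) K]
      congr 1
      · exact Finset.prod_congr rfl fun s _ => congrArg F (by omega)
      · rw [show off + 1 + K = off + (K + 1) from by omega, hper off, Nat.add_zero]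

lemma crit_complement {A : Fin n → Fin n → ℝ≥0} (h1 : mcgm A = 1) {x y : Fin n}
    (h : IsCriticalEdge A x y) :
    ∃ L : ℕ, ∃ v : ℕ → Fin n, v 0 = y ∧ v L = x ∧ A x y * nW A L v = 1 := by
  obtain ⟨k, hk, hkn, p, hclosed, hval, t, hx, hy⟩ := h
  have hw : pathWeight A k p = 1 := rpow_recip_eq_one hk (by rw [hval, h1])
  set q : ℕ → Fin n := fun s => p ⟨s % k, Nat.lt_succ_of_lt (Nat.mod_lt _ hk)⟩ with hq
  set F : ℕ → ℝ≥0 := fun s => A (q s) (q (s+1)) with hF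
  have hqper : ∀ s, q (s + k) = q s := fun s =>
    congrArg p (Fin.ext (by simp [Nat.add_mod_right]))
  have hFper : ∀ s, F (s + k) = F s := by
    intro s
    show A (q (s+k)) (q (s+k+1)) = A (q s) (q (s+1))
    rw [hqper s, show s + k + 1 = (s+1) + k from by omega, hqper (s+1)]
  have hq0 : ∀ u : Fin k, q u.val = p u.castSucc := fun u =>
    congrArg p (Fin.ext (by simp [Nat.mod_eq_of_lt u.isLt]))
  have hq1 : ∀ u : Fin k, q (u.val + 1) = p u.succ := by
    intro u
    rcases Nat.lt_or_ge (u.val + 1) k with hlt | hge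
    · exact congrArg p (Fin.ext (by simp [Nat.mod_eq_of_lt hlt]))
    · have heq : u.val + 1 = k := by omega
      have h0 : q (u.val + 1) = p 0 :=
        congrArg p (Fin.ext (by simp [heq, Nat.mod_self]))
      rw [h0, hclosed]
      exact congrArg p (Fin.ext (by simp [Fin.val_last, heq]))
  have hedge : ∀ u : Fin k, F u.val = A (p u.castSucc) (p u.succ) := by
    intro u
    show A (q u.val) (q (u.val + 1)) = _
    rw [hq0 u, hq1 u]
  have hpw : ∏ s ∈ Finset.range k, F s = pathWeight A k p := by
    rw [pathWeight, ← Fin.prod_univ_eq_prod_range F k]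
    exact Finset.prod_congr rfl fun u _ => hedge u
  have hwin : ∏ s ∈ Finset.range k, F (t.val + s) = 1 := by
    rw [prod_window_periodic F k hFper t.val, hpw, hw]
  obtain ⟨K, hK⟩ : ∃ K, k = K + 1 := ⟨k-1, by omega⟩
  refine ⟨K, fun s => q (t.val + 1 + s), ?_, ?_, ?_⟩
  · show q (t.val + 1 + 0) = y
    rw [Nat.add_zero, hq1 t, hy]
  · show q (t.val + 1 + K) = x
    rw [show t.val + 1 + K = t.val + k from by omega, hqper, hq0 t, hx]
  · have hnw : nW A K (fun s => q (t.val+1+s)) =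
        ∏ s ∈ Finset.range K, F (t.val + 1 + s) := rfl
    have hAxy : A x y = F t.val := by
      show A x y = A (q t.val) (q (t.val + 1))
      rw [hq0 t, hq1 t, hx, hy]
    rw [hnw, hAxy]
    calc F t.val * ∏ s ∈ Finset.range K, F (t.val+1+s)
        = ∏ s ∈ Finset.range (K+1), F (t.val + s) := by
          rw [Finset.prod_range_succ' (fun s => F (t.val + s)) K, mul_comm]
          congr 1
          exact Finset.prod_congr rfl fun s _ => congrArg F (by omega)
      _ = 1 := by rw [← hK]; exact hwin

lemma GE_walk_inverse {A : Fin n → Fin n → ℝ≥0} (h1 : mcgm A = 1)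
    (G : CritSubgraph A) :
    ∀ m (z : ℕ → Fin n), nIsPath G.E m z →
      ∃ L : ℕ, ∃ v : ℕ → Fin n, v 0 = z m ∧ v L = z 0 ∧ nW A m z * nW A L v = 1 := by
  intro m
  induction m with
  | zero => exact fun z _ => ⟨0, fun _ => z 0, rfl, rfl, by simp [nW]⟩
  | succ m ih =>
      intro z hz
      have hrest : nIsPath G.E m (fun t => z (t+1)) := fun t ht => hz (t+1) (by omega)
      obtain ⟨L', v', hv0, hvL, hprod⟩ := ih _ hrest
      have hcrit := G.critical _ _ (hz 0 (by omega))
      obtain ⟨L2, u, hu0, huL, huprod⟩ := crit_complement h1 hcrit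
      have hjoin : v' L' = u 0 := by rw [hvL, hu0]
      refine ⟨L' + L2, ncat L' v' u, ?_, ?_, ?_⟩
      · rw [ncat_apply_zero hjoin]
        exact hv0
      · rw [ncat_apply_add]
        exact huL
      · rw [nW_ncat _ _ _ _ _ hjoin, nW_succ']
        calc A (z 0) (z 1) * nW A m (fun t => z (t+1)) * (nW A L' v' * nW A L2 u)
            = (nW A m (fun t => z (t+1)) * nW A L' v') * (A (z 0) (z 1) * nW A L2 u) := by
              ring
          _ = 1 * 1 := by rw [hprod, huprod]
          _ = 1 := mul_one 1

lemma GE_closed_ge_one {A : Fin n → Fin n → ℝ≥0} (h1 : mcgm A = 1)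
    (G : CritSubgraph A) {m : ℕ} {z : ℕ → Fin n}
    (hz : nIsPath G.E m z) (hc : z 0 = z m) : 1 ≤ nW A m z := by
  obtain ⟨L, v, hv0, hvL, hprod⟩ := GE_walk_inverse h1 G m z hz
  have hvc : v 0 = v L := by rw [hv0, hvL, hc]
  have hvle : nW A L v ≤ 1 := closed_nW_le_one h1 L v hvc
  by_contra hlt
  push_neg at hlt
  have hcon : nW A m z * nW A L v < 1 :=
    calc nW A m z * nW A L v ≤ nW A m z * 1 := mul_le_mul_right hvle _
      _ = nW A m z := mul_one _
      _ < 1 := hlt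
  rw [hprod] at hcon
  exact lt_irrefl 1 hcon

lemma finpath_to_npath {E : Fin n → Fin n → Prop} {k : ℕ} {p : Fin (k+1) → Fin n}
    (hp : IsEPath E k p) :
    ∃ w : ℕ → Fin n, nIsPath E k w ∧ w 0 = p 0 ∧ w k = p (Fin.last k) := by
  refine ⟨fun s => p ⟨min s k, by omega⟩, ?_, ?_, ?_⟩
  · intro t ht
    have h1' : (⟨min t k, by omega⟩ : Fin (k+1)) = (⟨t, ht⟩ : Fin k).castSucc :=
      Fin.ext (by simp [Nat.min_eq_left (le_of_lt ht)])
    have h2' : (⟨min (t+1) k, by omega⟩ : Fin (k+1)) = (⟨t, ht⟩ : Fin k).succ :=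
      Fin.ext (by simp [Nat.min_eq_left ht])
    show E (p ⟨min t k, by omega⟩) (p ⟨min (t+1) k, by omega⟩)
    rw [h1', h2']
    exact hp ⟨t, ht⟩
  · exact congrArg p (Fin.ext (by simp))
  · exact congrArg p (Fin.ext (by simp [Fin.val_last]))

lemma Nc_cycle {A : Fin n → Fin n → ℝ≥0} (G : CritSubgraph A) {i : Fin n}
    (hi : G.Nc i) :
    ∃ c, 0 < c ∧ ∃ z : ℕ → Fin n, nIsPath G.E c z ∧ z 0 = i ∧ z c = i := by
  rcases hi with ⟨j, hij⟩ | ⟨j, hji⟩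
  · obtain ⟨k, p, hp, hp0, hpl⟩ := G.reducible i j hij
    obtain ⟨w, hw, hw0, hwk⟩ := finpath_to_npath hp
    have hjoin : (fun t => if t = 0 then i else j) 1 = w 0 := by
      rw [hw0, hp0]; simp
    refine ⟨1 + k, by omega, ncat 1 (fun t => if t = 0 then i else j) w, ?_, ?_, ?_⟩
    · refine nIsPath_ncat ?_ hw hjoin
      intro t ht
      have : t = 0 := by omega
      subst this
      show G.E (if (0:ℕ) = 0 then i else j) (if (1:ℕ) = 0 then i else j)
      simpa using hij
    · rw [ncat_apply_zero hjoin]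
      simp
    · rw [ncat_apply_add, hwk, hpl]
  · obtain ⟨k, p, hp, hp0, hpl⟩ := G.reducible j i hji
    obtain ⟨w, hw, hw0, hwk⟩ := finpath_to_npath hp
    have hjoin : w k = (fun t => if t = 0 then j else i) 0 := by
      rw [hwk, hpl]; simp
    refine ⟨k + 1, by omega, ncat k w (fun t => if t = 0 then j else i), ?_, ?_, ?_⟩
    · refine nIsPath_ncat hw ?_ hjoin
      intro t ht
      have : t = 0 := by omega
      subst this
      show G.E (if (0:ℕ) = 0 then j else i) (if (1:ℕ) = 0 then j else i)
      simpa using hji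
    · rw [ncat_apply_zero hjoin, hw0, hp0]
    · rw [ncat_apply_add]
      simp

lemma nW_S_eq_nW_A (A : Fin n → Fin n → ℝ≥0) (G : CritSubgraph A) {m : ℕ}
    {z : ℕ → Fin n} (hz : nIsPath G.E m z) :
    nW (Smat A G) m z = nW A m z := by
  refine Finset.prod_congr rfl fun t ht => ?_
  rw [Finset.mem_range] at ht
  show (if G.E (z t) (z (t+1)) then A (z t) (z (t+1)) else 0) = A (z t) (z (t+1))
  rw [if_pos (hz t ht)]

lemma Nc_diag {A : Fin n → Fin n → ℝ≥0} (h1 : mcgm A = 1) (G : CritSubgraph A)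
    {i : Fin n} (hi : G.Nc i) :
    ∃ c, 0 < c ∧ 1 ≤ mpow (Smat A G) c i i := by
  obtain ⟨c, hc, z, hz, hz0, hzc⟩ := Nc_cycle G hi
  refine ⟨c, hc, ?_⟩
  calc (1:ℝ≥0) ≤ nW A c z := GE_closed_ge_one h1 G hz (by rw [hz0, hzc])
    _ = nW (Smat A G) c z := (nW_S_eq_nW_A A G hz).symm
    _ ≤ mpow (Smat A G) c (z 0) (z c) := nW_le_mpow _ c z
    _ = mpow (Smat A G) c i i := by rw [hz0, hzc]

lemma diag_pow_le (S : Fin n → Fin n → ℝ≥0) (c : ℕ) (i : Fin n) :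
    ∀ m, (mpow S c i i) ^ m ≤ mpow S (c * m) i i := by
  intro m
  induction m with
  | zero => simp [mpow]
  | succ m ih =>
      calc (mpow S c i i) ^ (m+1) = (mpow S c i i) ^ m * mpow S c i i := pow_succ _ _
        _ ≤ mpow S (c*m) i i * mpow S c i i := mul_le_mul_left ih _
        _ ≤ mpow S (c*m + c) i i := le_mpow_add _ _ _ _ _ _
        _ = mpow S (c*(m+1)) i i := by ring_nf

lemma periodic_add_mul {S : Fin n → Fin n → ℝ≥0} {γ T : ℕ}
    (hT : ∀ t ≥ T, mpow S (t + γ) = mpow S t) {t : ℕ} (ht : T ≤ t) :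
    ∀ m, mpow S (t + m * γ) = mpow S t := by
  intro m
  induction m with
  | zero => rw [Nat.zero_mul, Nat.add_zero]
  | succ m ih =>
      have e : t + (m+1) * γ = (t + m * γ) + γ := by ring
      rw [e, hT _ (by omega), ih]

lemma diag_one {A : Fin n → Fin n → ℝ≥0} (h1 : mcgm A = 1) (G : CritSubgraph A)
    {T l : ℕ} (hT : ∀ t ≥ T, mpow (Smat A G) (t + graphCyc G.E) = mpow (Smat A G) t)
    (hl : T ≤ l * graphCyc G.E) {i : Fin n} (hi : G.Nc i) :
    1 ≤ mpow (Smat A G) (l * graphCyc G.E) i i := by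
  obtain ⟨c, hc, hdiag⟩ := Nc_diag h1 G hi
  obtain ⟨c', rfl⟩ : ∃ c', c = c' + 1 := ⟨c - 1, by omega⟩
  have e : (c' + 1) * (l * graphCyc G.E) =
      l * graphCyc G.E + (c' * l) * graphCyc G.E := by ring
  calc (1:ℝ≥0) = 1 ^ (l * graphCyc G.E) := (one_pow _).symm
    _ ≤ (mpow (Smat A G) (c'+1) i i) ^ (l * graphCyc G.E) :=
        pow_le_pow_left₀ zero_le hdiag _
    _ ≤ mpow (Smat A G) ((c'+1) * (l * graphCyc G.E)) i i := diag_pow_le _ _ _ _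
    _ = mpow (Smat A G) (l * graphCyc G.E) i i := by
        rw [e, periodic_add_mul hT hl]

end Aux

/-- with the CSR data for `A` (`λ(A) = 1`), if `{S^t}` is
periodic for `t ≥ T`, then `S^(lγ) ⊗ R = R` and `C ⊗ S^(lγ) = C` for every
multiple `lγ ≥ T`. -/
theorem csr_SR_CS_fixed {n : ℕ} (A : Fin n → Fin n → ℝ≥0) (h1 : mcgm A = 1)
    (G : CritSubgraph A) (T : ℕ)
    (hT : ∀ t ≥ T, mpow (Smat A G) (t + graphCyc G.E) = mpow (Smat A G) t) :
    ∀ l : ℕ, T ≤ l * graphCyc G.E →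
      mmul (mpow (Smat A G) (l * graphCyc G.E)) (Rmat A G) = Rmat A G ∧
      mmul (Cmat A G) (mpow (Smat A G) (l * graphCyc G.E)) = Cmat A G := by
  intro l hl
  rcases Nat.eq_zero_or_pos (l * graphCyc G.E) with h0 | hpos
  · rw [h0]
    exact ⟨mmul_id_left _ _, mmul_id_right _ _⟩
  have hSA : ∀ i j, Smat A G i j ≤ A i j := fun i j => by
    by_cases h : G.E i j <;> simp [Smat, h]
  have hrow : ∀ i, ¬ G.Nc i → ∀ m, Smat A G i m = 0 := fun i hi m => by
    by_cases h : G.E i m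
    · exact absurd (Or.inl ⟨m, h⟩) hi
    · simp [Smat, h]
  have hcol : ∀ j, ¬ G.Nc j → ∀ m, Smat A G m j = 0 := fun j hj m => by
    by_cases h : G.E m j
    · exact absurd (Or.inr ⟨m, h⟩) hj
    · simp [Smat, h]
  have hPB : ∀ i k, mpow (Smat A G) (l * graphCyc G.E) i k ≤
      mpow (mpow A (graphCyc G.E)) l i k := fun i k => by
    calc mpow (Smat A G) (l * graphCyc G.E) i k
        ≤ mpow A (l * graphCyc G.E) i k := mpow_mono hSA _ i k
      _ = mpow (mpow A (graphCyc G.E)) l i k := by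
          rw [show l * graphCyc G.E = graphCyc G.E * l from Nat.mul_comm l _, mpow_mul]
  have hdiag : ∀ i, G.Nc i → 1 ≤ mpow (Smat A G) (l * graphCyc G.E) i i :=
    fun i hi => diag_one h1 G hT hl hi
  constructor
  · funext i j
    apply le_antisymm
    · show (Finset.univ.sup fun k =>
        mpow (Smat A G) (l * graphCyc G.E) i k * Rmat A G k j) ≤ Rmat A G i j
      refine Finset.sup_le fun k _ => ?_
      by_cases hk : G.Nc k
      · by_cases hi : G.Nc i
        · have hR : Rmat A G k j = kleeneStar (mpow A (graphCyc G.E)) k j := by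
            simp [Rmat, hk]
          have hRij : Rmat A G i j = kleeneStar (mpow A (graphCyc G.E)) i j := by
            simp [Rmat, hi]
          rw [hR, hRij]
          calc mpow (Smat A G) (l * graphCyc G.E) i k *
                kleeneStar (mpow A (graphCyc G.E)) k j
              ≤ mpow (mpow A (graphCyc G.E)) l i k *
                kleeneStar (mpow A (graphCyc G.E)) k j := mul_le_mul_left (hPB i k) _
            _ ≤ kleeneStar (mpow A (graphCyc G.E)) i j := mpow_mul_kleene_le h1 _ l i k j
        · have hz : mpow (Smat A G) (l * graphCyc G.E) i k = 0 :=
            mpow_row_zero (hrow i hi) hpos k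
          rw [hz, zero_mul]
          exact zero_le
      · have hz : Rmat A G k j = 0 := by simp [Rmat, hk]
        rw [hz, mul_zero]
        exact zero_le
    · by_cases hi : G.Nc i
      · calc Rmat A G i j = 1 * Rmat A G i j := (one_mul _).symm
          _ ≤ mpow (Smat A G) (l * graphCyc G.E) i i * Rmat A G i j :=
              mul_le_mul_left (hdiag i hi) _
          _ ≤ _ := Finset.le_sup (f := fun k =>
              mpow (Smat A G) (l * graphCyc G.E) i k * Rmat A G k j) (Finset.mem_univ i)
      · have hz : Rmat A G i j = 0 := by simp [Rmat, hi]
        rw [hz]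
        exact zero_le
  · funext i j
    apply le_antisymm
    · show (Finset.univ.sup fun k =>
        Cmat A G i k * mpow (Smat A G) (l * graphCyc G.E) k j) ≤ Cmat A G i j
      refine Finset.sup_le fun k _ => ?_
      by_cases hk : G.Nc k
      · by_cases hj : G.Nc j
        · have hC : Cmat A G i k = kleeneStar (mpow A (graphCyc G.E)) i k := by
            simp [Cmat, hk]
          have hCij : Cmat A G i j = kleeneStar (mpow A (graphCyc G.E)) i j := by
            simp [Cmat, hj]
          rw [hC, hCij]
          calc kleeneStar (mpow A (graphCyc G.E)) i k *
                mpow (Smat A G) (l * graphCyc G.E) k j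
              ≤ kleeneStar (mpow A (graphCyc G.E)) i k *
                mpow (mpow A (graphCyc G.E)) l k j := mul_le_mul_right (hPB k j) _
            _ ≤ kleeneStar (mpow A (graphCyc G.E)) i j := kleene_mul_mpow_le h1 _ l i k j
        · have hz : mpow (Smat A G) (l * graphCyc G.E) k j = 0 :=
            mpow_col_zero (hcol j hj) hpos k
          rw [hz, mul_zero]
          exact zero_le
      · have hz : Cmat A G i k = 0 := by simp [Cmat, hk]
        rw [hz, zero_mul]
        exact zero_le
    · by_cases hj : G.Nc j
      · calc Cmat A G i j = Cmat A G i j * 1 := (mul_one _).symm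
          _ ≤ Cmat A G i j * mpow (Smat A G) (l * graphCyc G.E) j j :=
              mul_le_mul_right (hdiag j hj) _
          _ ≤ _ := Finset.le_sup (f := fun k =>
              Cmat A G i k * mpow (Smat A G) (l * graphCyc G.E) k j) (Finset.mem_univ j)
      · have hz : Cmat A G i j = 0 := by simp [Cmat, hj]
        rw [hz]
        exact zero_le

end MaxAlg
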